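/- Let θ₁, θ₂, θ₃ ∈ [0, π]. Then there exist matrices A, B in the special unitary group SU(2) (Matrix.specialUnitaryGroup (Fin 2) ℂ) with trace A = 2cos θ₁, trace B = 2cos θ₂, and trace (A·B) = 2cos θ₃, if and only if |θ₁ − θ₂| ≤ θ₃, θ₃ ≤ θ₁ + θ₂, and θ₃ ≤ 2π − θ₁ − θ₂. -/
import Mathlib

open Real

namespace SU2Aux

open Matrix

noncomputable def su2 (a b : ℂ) : Matrix (Fin 2) (Fin 2) ℂ :=
  !![a, b; -(starRingEnd ℂ) b, (starRingEnd ℂ) a]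

lemma su2_mem (a b : ℂ) (h : Complex.normSq a + Complex.normSq b = 1) :
    su2 a b ∈ Matrix.specialUnitaryGroup (Fin 2) ℂ := by
  have h' : a * (starRingEnd ℂ) a + b * (starRingEnd ℂ) b = 1 := by
    rw [Complex.mul_conj, Complex.mul_conj]
    exact_mod_cast congrArg (Complex.ofReal) h
  rw [Matrix.mem_specialUnitaryGroup_iff]
  constructor
  · rw [Matrix.mem_unitaryGroup_iff]
    ext i j
    fin_cases i <;> fin_cases j <;>
      simp [su2, Matrix.mul_apply, Fin.sum_univ_two, Matrix.one_apply,
        Matrix.conjTranspose_apply]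
    · exact h'
    · ring
    · ring
    · show (starRingEnd ℂ) b * b + (starRingEnd ℂ) a * a = 1
      linear_combination h'
  · rw [su2, Matrix.det_fin_two_of]
    linear_combination h'

lemma su2_structure (M : Matrix (Fin 2) (Fin 2) ℂ)
    (hM : M ∈ Matrix.specialUnitaryGroup (Fin 2) ℂ) :
    M = su2 (M 0 0) (M 0 1) ∧
      Complex.normSq (M 0 0) + Complex.normSq (M 0 1) = 1 := by
  obtain ⟨hu, hdet⟩ := Matrix.mem_specialUnitaryGroup_iff.mp hM
  have h1 : M * star M = 1 := Matrix.mem_unitaryGroup_iff.mp hu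
  have hadj : star M = Matrix.adjugate M := by
    have h2 : Matrix.adjugate M * M = 1 := by
      rw [Matrix.adjugate_mul, hdet, one_smul]
    calc star M = (Matrix.adjugate M * M) * star M := by rw [h2, one_mul]
      _ = Matrix.adjugate M * (M * star M) := by rw [mul_assoc]
      _ = Matrix.adjugate M := by rw [h1, mul_one]
  have e11 : M 1 1 = (starRingEnd ℂ) (M 0 0) := by
    have h := congrFun (congrFun hadj 0) 0
    rw [Matrix.adjugate_fin_two] at h
    simp only [Matrix.star_apply, Matrix.cons_val', Matrix.cons_val_zero,
      Matrix.empty_val', Matrix.cons_val_fin_one, Matrix.of_apply] at h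
    exact h.symm
  have e10 : M 1 0 = -(starRingEnd ℂ) (M 0 1) := by
    have h := congrFun (congrFun hadj 0) 1
    rw [Matrix.adjugate_fin_two] at h
    simp only [Matrix.star_apply, Matrix.cons_val', Matrix.cons_val_zero,
      Matrix.cons_val_one, Matrix.head_cons, Matrix.empty_val',
      Matrix.cons_val_fin_one, Matrix.of_apply] at h
    have h2 := congrArg (starRingEnd ℂ) h
    simp only [map_neg, Complex.conj_conj] at h2
    rw [← h2]
    simp
  constructor
  · rw [su2, ← e11, ← e10]
    exact Matrix.eta_fin_two M
  · have h := congrFun (congrFun h1 0) 0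
    simp only [Matrix.mul_apply, Fin.sum_univ_two, Matrix.star_apply,
      Matrix.one_apply_eq] at h
    rw [show star (M 0 0) = (starRingEnd ℂ) (M 0 0) from rfl,
      show star (M 0 1) = (starRingEnd ℂ) (M 0 1) from rfl,
      Complex.mul_conj, Complex.mul_conj] at h
    exact_mod_cast h

lemma su2_trace (a b : ℂ) :
    Matrix.trace (su2 a b) = ((2 * a.re : ℝ) : ℂ) := by
  rw [su2, Matrix.trace_fin_two_of]
  rw [show (starRingEnd ℂ) a = star a from rfl]
  rw [show a + star a = ((2 * a.re : ℝ) : ℂ) from Complex.add_conj a]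

lemma su2_mul_trace (a b c d : ℂ) :
    Matrix.trace (su2 a b * su2 c d) =
      ((2 * (a * c - b * (starRingEnd ℂ) d).re : ℝ) : ℂ) := by
  rw [su2, su2, Matrix.mul_fin_two, Matrix.trace_fin_two_of]
  have key : a * c + b * -(starRingEnd ℂ) d + (-(starRingEnd ℂ) b * d +
      (starRingEnd ℂ) a * (starRingEnd ℂ) c) =
      (a * c - b * (starRingEnd ℂ) d) +
        (starRingEnd ℂ) (a * c - b * (starRingEnd ℂ) d) := by
    simp only [map_sub, RingHom.map_mul, Complex.conj_conj]
    ring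
  rw [key, Complex.add_conj]

/-- Cauchy–Schwarz style bound. -/
lemma key_bound {x y P Q r s₁ s₂ : ℝ} (hx : x ^ 2 + P = s₁ ^ 2)
    (hy : y ^ 2 + Q = s₂ ^ 2) (hr : r ^ 2 ≤ P * Q) (hP : 0 ≤ P) (hQ : 0 ≤ Q)
    (hs₁ : 0 ≤ s₁) (hs₂ : 0 ≤ s₂) :
    |x * y + r| ≤ s₁ * s₂ := by
  obtain ⟨p, hp0, hp⟩ : ∃ p, 0 ≤ p ∧ p ^ 2 = P :=
    ⟨Real.sqrt P, Real.sqrt_nonneg P, Real.sq_sqrt hP⟩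
  obtain ⟨q, hq0, hq⟩ : ∃ q, 0 ≤ q ∧ q ^ 2 = Q :=
    ⟨Real.sqrt Q, Real.sqrt_nonneg Q, Real.sq_sqrt hQ⟩
  have hrpq : |r| ≤ p * q := by
    nlinarith [abs_nonneg r, sq_abs r, mul_nonneg hp0 hq0]
  have habs : |x * y + r| ≤ |x| * |y| + p * q := by
    calc |x * y + r| ≤ |x * y| + |r| := abs_add_le _ _
      _ = |x| * |y| + |r| := by rw [abs_mul]
      _ ≤ |x| * |y| + p * q := by linarith
  have hsq : (|x| * |y| + p * q) ^ 2 ≤ (s₁ * s₂) ^ 2 := by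
    have h1 : (s₁ * s₂) ^ 2 = (x ^ 2 + P) * (y ^ 2 + Q) := by
      rw [hx, hy]; ring
    rw [h1, ← hp, ← hq]
    nlinarith [sq_nonneg (|x| * q - |y| * p), sq_abs x, sq_abs y]
  have hfin : |x| * |y| + p * q ≤ s₁ * s₂ := by
    nlinarith [mul_nonneg hp0 hq0, mul_nonneg hs₁ hs₂,
      mul_nonneg (abs_nonneg x) (abs_nonneg y)]
  linarith

end SU2Aux

set_option maxHeartbeats 1000000 in
/-- Lemma 3.2 (Sebastian–Zentner): for `θ₁, θ₂, θ₃ ∈ [0, π]`, there exist `A, B ∈ SU(2)`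
with traces `2cos θ₁`, `2cos θ₂` and `trace (AB) = 2cos θ₃` iff
`|θ₁ - θ₂| ≤ θ₃ ≤ min(θ₁ + θ₂, 2π - θ₁ - θ₂)`. -/
theorem stmt_10 (θ₁ θ₂ θ₃ : ℝ)
    (h₁ : θ₁ ∈ Set.Icc 0 π) (h₂ : θ₂ ∈ Set.Icc 0 π) (h₃ : θ₃ ∈ Set.Icc 0 π) :
    (∃ A B : Matrix.specialUnitaryGroup (Fin 2) ℂ,
        Matrix.trace (A : Matrix (Fin 2) (Fin 2) ℂ) = ((2 * Real.cos θ₁ : ℝ) : ℂ) ∧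
        Matrix.trace (B : Matrix (Fin 2) (Fin 2) ℂ) = ((2 * Real.cos θ₂ : ℝ) : ℂ) ∧
        Matrix.trace ((A * B : Matrix.specialUnitaryGroup (Fin 2) ℂ) :
          Matrix (Fin 2) (Fin 2) ℂ) = ((2 * Real.cos θ₃ : ℝ) : ℂ)) ↔
      |θ₁ - θ₂| ≤ θ₃ ∧ θ₃ ≤ θ₁ + θ₂ ∧ θ₃ ≤ 2 * π - θ₁ - θ₂ := by
  obtain ⟨h₁0, h₁π⟩ := h₁
  obtain ⟨h₂0, h₂π⟩ := h₂
  obtain ⟨h₃0, h₃π⟩ := h₃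
  have hs₁ : 0 ≤ Real.sin θ₁ := Real.sin_nonneg_of_nonneg_of_le_pi h₁0 h₁π
  have hs₂ : 0 ≤ Real.sin θ₂ := Real.sin_nonneg_of_nonneg_of_le_pi h₂0 h₂π
  constructor
  · rintro ⟨A, B, hA, hB, hAB⟩
    obtain ⟨hAeq, hAn⟩ := SU2Aux.su2_structure A A.2
    obtain ⟨hBeq, hBn⟩ := SU2Aux.su2_structure B B.2
    set a := (A : Matrix (Fin 2) (Fin 2) ℂ) 0 0 with ha
    set b := (A : Matrix (Fin 2) (Fin 2) ℂ) 0 1 with hb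
    set c := (B : Matrix (Fin 2) (Fin 2) ℂ) 0 0 with hc
    set d := (B : Matrix (Fin 2) (Fin 2) ℂ) 0 1 with hd
    -- real parts of a and c
    have hAtr : Matrix.trace (A : Matrix (Fin 2) (Fin 2) ℂ) = ((2 * a.re : ℝ) : ℂ) := by
      rw [hAeq]; exact SU2Aux.su2_trace a b
    have hBtr : Matrix.trace (B : Matrix (Fin 2) (Fin 2) ℂ) = ((2 * c.re : ℝ) : ℂ) := by
      rw [hBeq]; exact SU2Aux.su2_trace c d
    have hare : a.re = Real.cos θ₁ := by
      have := hAtr.symm.trans hA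
      have := Complex.ofReal_inj.mp this
      linarith
    have hcre : c.re = Real.cos θ₂ := by
      have := hBtr.symm.trans hB
      have := Complex.ofReal_inj.mp this
      linarith
    -- trace of product
    have hABtr : Matrix.trace ((A * B : Matrix.specialUnitaryGroup (Fin 2) ℂ) :
        Matrix (Fin 2) (Fin 2) ℂ) =
        ((2 * (a * c - b * (starRingEnd ℂ) d).re : ℝ) : ℂ) := by
      have : ((A * B : Matrix.specialUnitaryGroup (Fin 2) ℂ) :
          Matrix (Fin 2) (Fin 2) ℂ) = SU2Aux.su2 a b * SU2Aux.su2 c d := by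
        push_cast
        rw [← hAeq, ← hBeq]
      rw [this]
      exact SU2Aux.su2_mul_trace a b c d
    have hkey : (a * c - b * (starRingEnd ℂ) d).re = Real.cos θ₃ := by
      have := hABtr.symm.trans hAB
      have := Complex.ofReal_inj.mp this
      linarith
    -- the quantitative estimate
    have hre : (a * c - b * (starRingEnd ℂ) d).re =
        Real.cos θ₁ * Real.cos θ₂ - (a.im * c.im +
          (b * (starRingEnd ℂ) d).re) := by
      simp [Complex.sub_re, Complex.mul_re, hare, hcre]
      ring
    have hbd : ((b * (starRingEnd ℂ) d).re) ^ 2 ≤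
        Complex.normSq b * Complex.normSq d := by
      have h1 : ((b * (starRingEnd ℂ) d).re) ^ 2 ≤
          Complex.normSq (b * (starRingEnd ℂ) d) := by
        have := Complex.normSq_apply (b * (starRingEnd ℂ) d)
        nlinarith [sq_nonneg ((b * (starRingEnd ℂ) d).im)]
      calc ((b * (starRingEnd ℂ) d).re) ^ 2 ≤
          Complex.normSq (b * (starRingEnd ℂ) d) := h1
        _ = Complex.normSq b * Complex.normSq d := by
          rw [Complex.normSq_mul, Complex.normSq_conj]
    have hxP : a.im ^ 2 + Complex.normSq b = Real.sin θ₁ ^ 2 := by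
      have h1 : Complex.normSq a = a.re ^ 2 + a.im ^ 2 := by
        rw [Complex.normSq_apply]; ring
      have h2 := Real.sin_sq_add_cos_sq θ₁
      rw [h1, hare] at hAn
      nlinarith
    have hyQ : c.im ^ 2 + Complex.normSq d = Real.sin θ₂ ^ 2 := by
      have h1 : Complex.normSq c = c.re ^ 2 + c.im ^ 2 := by
        rw [Complex.normSq_apply]; ring
      have h2 := Real.sin_sq_add_cos_sq θ₂
      rw [h1, hcre] at hBn
      nlinarith
    have hbound := SU2Aux.key_bound hxP hyQ hbd (Complex.normSq_nonneg b)
      (Complex.normSq_nonneg d) hs₁ hs₂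
    rw [hkey] at hre
    rw [abs_le] at hbound
    have hcos1 : Real.cos (θ₁ + θ₂) ≤ Real.cos θ₃ := by
      rw [Real.cos_add]; linarith
    have hcos2 : Real.cos θ₃ ≤ Real.cos (θ₁ - θ₂) := by
      rw [Real.cos_sub]; linarith
    refine ⟨?_, ?_, ?_⟩
    · by_contra h
      push_neg at h
      have habs : |θ₁ - θ₂| ≤ π := by
        rw [abs_le]; constructor <;> linarith
      have := Real.cos_lt_cos_of_nonneg_of_le_pi h₃0 habs h
      rw [Real.cos_abs] at this
      linarith
    · by_contra h
      push_neg at h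
      have := Real.cos_lt_cos_of_nonneg_of_le_pi (by linarith : (0:ℝ) ≤ θ₁ + θ₂)
        h₃π h
      linarith
    · by_contra h
      push_neg at h
      have := Real.cos_lt_cos_of_nonneg_of_le_pi
        (by linarith : (0:ℝ) ≤ 2 * π - θ₁ - θ₂) h₃π h
      rw [show 2 * π - θ₁ - θ₂ = 2 * π - (θ₁ + θ₂) by ring,
        Real.cos_two_pi_sub] at this
      linarith
  · rintro ⟨hd, hsum, h2π⟩
    -- derive the cosine inequalities
    have hcos2 : Real.cos θ₃ ≤ Real.cos (θ₁ - θ₂) := by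
      rw [← Real.cos_abs (θ₁ - θ₂)]
      exact Real.cos_le_cos_of_nonneg_of_le_pi (abs_nonneg _) h₃π hd
    have hcos1 : Real.cos (θ₁ + θ₂) ≤ Real.cos θ₃ := by
      rcases le_or_gt (θ₁ + θ₂) π with h | h
      · exact Real.cos_le_cos_of_nonneg_of_le_pi h₃0 h hsum
      · have h1 : Real.cos (2 * π - (θ₁ + θ₂)) ≤ Real.cos θ₃ :=
          Real.cos_le_cos_of_nonneg_of_le_pi h₃0 (by linarith)
            (by linarith)
        rwa [Real.cos_two_pi_sub] at h1
    rw [Real.cos_add] at hcos1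
    rw [Real.cos_sub] at hcos2
    -- choose the interpolation parameter u
    set S := Real.sin θ₁ * Real.sin θ₂ with hS
    have hS0 : 0 ≤ S := mul_nonneg hs₁ hs₂
    obtain ⟨u, hu1, huS⟩ : ∃ u : ℝ, u ^ 2 ≤ 1 ∧
        u * S = Real.cos θ₁ * Real.cos θ₂ - Real.cos θ₃ := by
      by_cases hSz : S = 0
      · refine ⟨0, by norm_num, ?_⟩
        rw [hSz, mul_zero]
        rw [hS] at hSz
        linarith [hcos1, hcos2]
      · have hSpos : 0 < S := lt_of_le_of_ne hS0 (Ne.symm hSz)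
        refine ⟨(Real.cos θ₁ * Real.cos θ₂ - Real.cos θ₃) / S, ?_, ?_⟩
        · rw [div_pow, div_le_one (pow_pos hSpos 2)]
          nlinarith
        · field_simp
      -- done
    have hu1' : 0 ≤ 1 - u ^ 2 := by linarith
    set v := Real.sqrt (1 - u ^ 2) with hv
    have hv2 : v ^ 2 = 1 - u ^ 2 := Real.sq_sqrt hu1'
    -- build the matrices
    set a : ℂ := ⟨Real.cos θ₁, Real.sin θ₁⟩ with haa
    set c : ℂ := ⟨Real.cos θ₂, u * Real.sin θ₂⟩ with hcc
    set d : ℂ := ((v * Real.sin θ₂ : ℝ) : ℂ) with hdd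
    have hna : Complex.normSq a + Complex.normSq (0 : ℂ) = 1 := by
      rw [haa, Complex.normSq_mk, Complex.normSq_zero, add_zero]
      nlinarith [Real.sin_sq_add_cos_sq θ₁]
    have hnc : Complex.normSq c + Complex.normSq d = 1 := by
      rw [hcc, hdd, Complex.normSq_mk, Complex.normSq_ofReal]
      nlinarith [Real.sin_sq_add_cos_sq θ₂, hv2]
    have e1 : a.re = Real.cos θ₁ := rfl
    have e2 : a.im = Real.sin θ₁ := rfl
    have e3 : c.re = Real.cos θ₂ := rfl
    have e4 : c.im = u * Real.sin θ₂ := rfl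
    refine ⟨⟨SU2Aux.su2 a 0, SU2Aux.su2_mem a 0 hna⟩,
      ⟨SU2Aux.su2 c d, SU2Aux.su2_mem c d hnc⟩, ?_, ?_, ?_⟩
    · rw [SU2Aux.su2_trace, e1]
    · rw [SU2Aux.su2_trace, e3]
    · rw [MulMemClass.coe_mul]
      show Matrix.trace (SU2Aux.su2 a 0 * SU2Aux.su2 c d) = _
      rw [SU2Aux.su2_mul_trace]
      have hre : (a * c - 0 * (starRingEnd ℂ) d).re = Real.cos θ₃ := by
        simp only [zero_mul, sub_zero, Complex.mul_re, e1, e2, e3, e4]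
        linear_combination -huS
      rw [hre]
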